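/- Let G be a group, A a commutative group, and ρ : G →* MulAut A a group homomorphism, with induced functor Bρ : SingleObj G ⥤ SingleObj (MulAut A). Then the functors F : SingleObj G ⥤ ActionCategory (MulAut A) A satisfying F ⋙ π = Bρ, where π : ActionCategory (MulAut A) A ⥤ SingleObj (MulAut A) is the canonical projection, are in bijection with the set of fixed points {a ∈ A | ∀ g ∈ G, ρ(g)(a) = a}. (This realizes the identification of degree-0 cohomology with coefficients in the local system ρ with lifts through the universal fibration θ₀ : Aut(A) ⋉ A → K(Aut(A),1), for the classifying space of G.) -/

import Mathlib

open CategoryTheory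

universe u

/-- Let `G` be a group, `A` a commutative group and `ρ : G →* MulAut A` a group
homomorphism, with induced functor `Bρ : SingleObj G ⥤ SingleObj (MulAut A)`.
The functors `F : SingleObj G ⥤ ActionCategory (MulAut A) A` with
`F ⋙ π = Bρ` (where `π` is the canonical projection of the action groupoid)
are in bijection with the fixed points `{a ∈ A | ∀ g, ρ(g)(a) = a}`.  This
identifies degree-0 cohomology of `BG` with coefficients in the local system `ρ`
with lifts through the universal fibration `θ₀ : Aut(A) ⋉ A → K(Aut(A),1)`. -/
theorem lifts_equiv_fixedPoints (G A : Type u) [Group G] [CommGroup A]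
    (ρ : G →* MulAut A) :
    Nonempty
      ({F : SingleObj G ⥤ ActionCategory (MulAut A) A //
          F ⋙ ActionCategory.π (MulAut A) A = ρ.toFunctor} ≃
        {a : A // ∀ g : G, ρ g a = a}) := by
  constructor
  have key : ∀ (F : SingleObj G ⥤ ActionCategory (MulAut A) A),
      F ⋙ ActionCategory.π (MulAut A) A = ρ.toFunctor →
      ∀ g : G, (F.map (X := SingleObj.star G) (Y := SingleObj.star G) g).val = ρ g := by
    intro F h g
    have := Functor.congr_hom h (X := SingleObj.star G) (Y := SingleObj.star G) g
    simp at this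
    exact this
  refine
    { toFun := fun F => ⟨(F.1.obj (SingleObj.star G)).back, fun g => ?_⟩
      invFun := fun a =>
        ⟨{ obj := fun _ => (a.1 : ActionCategory (MulAut A) A)
           map := fun g => ⟨ρ g, ?_⟩
           map_id := ?_
           map_comp := ?_ }, ?_⟩
      left_inv := ?_
      right_inv := ?_ }
  · have := (F.1.map (X := SingleObj.star G) (Y := SingleObj.star G) g).2
    have hval := key F.1 F.2 g
    rw [hval] at this
    exact this
  · show ρ g • a.1 = a.1
    exact a.2 g
  · intro x
    exact Subtype.ext (map_one ρ)
  · intro x y z f g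
    exact Subtype.ext (map_mul ρ g f)
  · rfl
  · rintro ⟨F, hF⟩
    ext1
    have eq1 : ∀ {p q : ActionCategory (MulAut A) A} (h : p = q), (eqToHom h).val = (1 : MulAut A) := by
      rintro p q rfl; rfl
    refine CategoryTheory.Functor.ext (fun x => ?_) (fun x y f => ?_)
    · exact (ActionCategory.back_coe _).symm
    · apply Subtype.ext
      dsimp only
      erw [ActionCategory.comp_val, ActionCategory.comp_val, eq1]
      erw [mul_one]
      exact (key F hF f).symm
  · rintro ⟨a, ha⟩
    rfl
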